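/- Let $(h_k)_{k\ge 1}$ be defined by $h_1 = 1$ and $h_k = \sum_{l=1}^{k-1} h_l h_{k-l}$ for $k \ge 2$. Then $h_k \le 5^{k-1}/k^2$ for all $k \ge 1$. -/

import Mathlib

open Nat Finset

lemma centralBinom_le_four_pow (n : ℕ) : Nat.centralBinom n ≤ 4 ^ n := by
  have h : Nat.centralBinom n ≤ ∑ m ∈ range (2 * n + 1), (2 * n).choose m := by
    exact Finset.single_le_sum (f := fun m => (2 * n).choose m)
      (fun i _ => Nat.zero_le _) (by simp [Nat.lt_succ_iff]; omega)
  rw [Nat.sum_range_choose] at h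
  calc Nat.centralBinom n ≤ 2 ^ (2 * n) := h
    _ = 4 ^ n := by rw [pow_mul]; norm_num

lemma aux_pow (n : ℕ) (hn : 12 ≤ n) : (n + 1) * 4 ^ n ≤ 5 ^ n := by
  induction n with
  | zero => omega
  | succ m ih =>
    rcases Nat.lt_or_ge m 12 with hm | hm
    · have : m = 11 := by omega
      subst this; norm_num
    · have h1 := ih (by omega)
      calc (m + 2) * 4 ^ (m + 1) = 4 * ((m + 2) * 4 ^ m) := by ring
        _ ≤ 5 * ((m + 1) * 4 ^ m) := by nlinarith [pow_pos (show 0 < 4 by norm_num) m]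
        _ ≤ 5 * 5 ^ m := by nlinarith
        _ = 5 ^ (m + 1) := by ring

lemma key (n : ℕ) : (n + 1) ^ 2 * catalan n ≤ 5 ^ n := by
  have hc : (n + 1) ^ 2 * catalan n = (n + 1) * ((n + 1) * catalan n) := by ring
  rw [hc, succ_mul_catalan_eq_centralBinom]
  rcases Nat.lt_or_ge n 12 with hn | hn
  · interval_cases n <;> simp [Nat.centralBinom] <;> decide
  · calc (n + 1) * Nat.centralBinom n ≤ (n + 1) * 4 ^ n := by
          exact Nat.mul_le_mul_left _ (_root_.centralBinom_le_four_pow n)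
    _ ≤ 5 ^ n := aux_pow n hn

lemma h_eq_catalan (h : ℕ → ℕ) (h1 : h 1 = 1)
    (hrec : ∀ k, 2 ≤ k → h k = ∑ l ∈ Finset.Ico 1 k, h l * h (k - l)) :
    ∀ k, 1 ≤ k → h k = catalan (k - 1) := by
  intro k
  induction k using Nat.strong_induction_on with
  | _ k ih =>
    intro hk
    rcases Nat.lt_or_ge k 2 with h2 | h2
    · interval_cases k
      simp [h1]
    · obtain ⟨m, rfl⟩ : ∃ m, k = m + 2 := ⟨k - 2, by omega⟩
      rw [hrec _ h2]
      have : ∑ l ∈ Finset.Ico 1 (m + 2), h l * h (m + 2 - l)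
          = ∑ l ∈ Finset.Ico 1 (m + 2), catalan (l - 1) * catalan (m + 1 - l) := by
        apply Finset.sum_congr rfl
        intro l hl
        simp only [Finset.mem_Ico] at hl
        rw [ih l (by omega) (by omega), ih (m + 2 - l) (by omega) (by omega)]
        congr 1
        congr 1
        omega
      rw [this]
      have hshift : ∑ l ∈ Finset.Ico 1 (m + 2), catalan (l - 1) * catalan (m + 1 - l)
          = ∑ i ∈ Finset.range (m + 1), catalan i * catalan (m - i) := by
        rw [Finset.sum_Ico_eq_sum_range]
        apply Finset.sum_congr (by norm_num)
        intro i hi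
        simp only [Finset.mem_range] at hi
        congr 1
        · congr 1; omega
        · congr 1; omega
      rw [hshift]
      have hc : catalan (m + 1) = ∑ i ∈ Finset.range (m + 1), catalan i * catalan (m - i) := by
        rw [catalan_succ', Finset.Nat.sum_antidiagonal_eq_sum_range_succ_mk]
      rw [← hc]
      norm_num

theorem stmt_1 (h : ℕ → ℕ) (h1 : h 1 = 1)
    (hrec : ∀ k, 2 ≤ k → h k = ∑ l ∈ Finset.Ico 1 k, h l * h (k - l)) :
    ∀ k, 1 ≤ k → (h k : ℝ) ≤ 5 ^ (k - 1) / (k : ℝ) ^ 2 := by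
  intro k hk
  rw [h_eq_catalan h h1 hrec k hk]
  rw [le_div_iff₀ (by positivity)]
  have hkey := key (k - 1)
  have hk1 : k - 1 + 1 = k := by omega
  rw [hk1] at hkey
  calc (catalan (k - 1) : ℝ) * (k : ℝ) ^ 2
      = ((k ^ 2 * catalan (k - 1) : ℕ) : ℝ) := by push_cast; ring
    _ ≤ ((5 ^ (k - 1) : ℕ) : ℝ) := by exact_mod_cast hkey
    _ = 5 ^ (k - 1) := by push_cast; ring
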